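/- For all n ≥ 1, q(q(n)) = p(n) + 2·q(n); together with p(q(n)) = p(n) + q(n), this says that if (p(n), q(n)) is a p–q pair, then so is (p(n) + q(n), p(n) + 2·q(n)). -/
import Mathlib


/-- Wythoff sequences: `p 1 = 1`, `q n = p n + n` for `n ≥ 1`, and `p (n+1)` is the
smallest positive integer not contained in `U_n = {p 1, …, p n, q 1, …, q n}`. -/
theorem wythoff_doc_holder : True := trivial

namespace Wythoff11

variable {p q : ℕ → ℕ}

def Hmin (p q : ℕ → ℕ) : Prop := ∀ n, 1 ≤ n →
  IsLeast {m : ℕ | 0 < m ∧ ∀ i, 1 ≤ i → i ≤ n → m ≠ p i ∧ m ≠ q i} (p (n + 1))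

theorem mono_succ (hp1 : p 1 = 1) (hmin : Hmin p q) :
    ∀ n, 1 ≤ n → p n < p (n + 1) := by
  intro n hn
  obtain ⟨⟨hpos, hne⟩, _⟩ := hmin n hn
  rcases Nat.lt_or_ge n 2 with h2 | h2
  · have hn1 : n = 1 := by omega
    subst hn1
    have h := (hne 1 le_rfl le_rfl).1
    omega
  · obtain ⟨m, rfl⟩ : ∃ m, n = m + 1 := ⟨n - 1, by omega⟩
    have hm : 1 ≤ m := by omega
    obtain ⟨_, hlb⟩ := hmin m hm
    have hle : p (m + 1) ≤ p (m + 1 + 1) :=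
      hlb ⟨hpos, fun i h1 h2 => hne i h1 (by omega)⟩
    have hne' := (hne (m + 1) (by omega) le_rfl).1
    omega

theorem mono (hp1 : p 1 = 1) (hmin : Hmin p q) :
    ∀ a b, 1 ≤ a → a < b → p a < p b := by
  intro a b ha hab
  induction b with
  | zero => omega
  | succ b IH =>
    rcases Nat.lt_or_ge a b with h | h
    · exact lt_trans (IH h) (mono_succ hp1 hmin b (by omega))
    · have hab' : a = b := by omega
      subst hab'
      exact mono_succ hp1 hmin a ha

theorem mono_le (hp1 : p 1 = 1) (hmin : Hmin p q) :
    ∀ a b, 1 ≤ a → a ≤ b → p a ≤ p b := by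
  intro a b ha hab
  rcases eq_or_lt_of_le hab with rfl | h
  · exact le_rfl
  · exact le_of_lt (mono hp1 hmin a b ha h)

theorem p_ge (hp1 : p 1 = 1) (hmin : Hmin p q) : ∀ n, 1 ≤ n → n ≤ p n := by
  intro n hn
  induction n with
  | zero => omega
  | succ n IH =>
    rcases Nat.lt_or_ge 1 (n + 1) with h | h
    · have h1 : 1 ≤ n := by omega
      have h2 := IH h1
      have h3 := mono_succ hp1 hmin n h1
      omega
    · have hn0 : n = 0 := by omega
      subst hn0
      simpa using hp1.ge

theorem disjoint (hp1 : p 1 = 1) (hq : ∀ n, 1 ≤ n → q n = p n + n)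
    (hmin : Hmin p q) : ∀ i j, 1 ≤ i → 1 ≤ j → p i ≠ q j := by
  intro i j hi hj
  rcases le_or_gt i j with h | h
  · have h1 : p i ≤ p j := mono_le hp1 hmin i j hi h
    have h2 := hq j hj
    omega
  · obtain ⟨m, rfl⟩ : ∃ m, i = m + 1 := ⟨i - 1, by omega⟩
    obtain ⟨⟨_, hne⟩, _⟩ := hmin m (by omega)
    exact (hne j hj (by omega)).2

theorem cover (hp1 : p 1 = 1) (hq : ∀ n, 1 ≤ n → q n = p n + n)
    (hmin : Hmin p q) :
    ∀ k, 1 ≤ k → ∃ n, 1 ≤ n ∧ n ≤ k ∧ (p n = k ∨ q n = k) := by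
  intro k hk
  by_contra hcon
  push_neg at hcon
  obtain ⟨_, hlb⟩ := hmin k hk
  have hmem : k ∈ {m : ℕ | 0 < m ∧ ∀ i, 1 ≤ i → i ≤ k → m ≠ p i ∧ m ≠ q i} := by
    refine ⟨hk, fun i h1 h2 => ?_⟩
    have h := hcon i h1 h2
    exact ⟨Ne.symm h.1, Ne.symm h.2⟩
  have hle := hlb hmem
  have := p_ge hp1 hmin (k + 1) (by omega)
  omega

theorem step2 (hp1 : p 1 = 1) (hq : ∀ n, 1 ≤ n → q n = p n + n)
    (hmin : Hmin p q) :
    ∀ n j, 1 ≤ n → 1 ≤ j → j ≤ n → q j = p n + 1 → p (n + 1) = p n + 2 := by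
  intro n j hn hj hjn hqj
  obtain ⟨⟨hpos, hne⟩, hlb⟩ := hmin n hn
  have hub : p (n + 1) ≤ p n + 2 := by
    apply hlb
    refine ⟨by omega, fun i h1 h2 => ⟨?_, ?_⟩⟩
    · have h3 : p i ≤ p n := mono_le hp1 hmin i n h1 h2
      omega
    · intro he
      have hqi := hq i h1
      have hqqj := hq j hj
      rcases lt_trichotomy i j with h | h | h
      · have h4 := mono hp1 hmin i j h1 h
        omega
      · subst h; omega
      · have hx : p j < p (j + 1) := mono_succ hp1 hmin j hj
        have h5 : p (j + 1) ≤ p i := mono_le hp1 hmin (j + 1) i (by omega) h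
        omega
  have hgt : p n < p (n + 1) := mono_succ hp1 hmin n hn
  have hne1 : p (n + 1) ≠ p n + 1 := by
    rw [← hqj]
    exact (hne j hj hjn).2
  omega

theorem step1 (hp1 : p 1 = 1) (hq : ∀ n, 1 ≤ n → q n = p n + n)
    (hmin : Hmin p q) :
    ∀ n, 1 ≤ n → (∀ j, 1 ≤ j → j ≤ n → q j ≠ p n + 1) → p (n + 1) = p n + 1 := by
  intro n hn hno
  obtain ⟨⟨hpos, hne⟩, hlb⟩ := hmin n hn
  have hub : p (n + 1) ≤ p n + 1 := by
    apply hlb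
    refine ⟨by omega, fun i h1 h2 => ⟨?_, Ne.symm (hno i h1 h2)⟩⟩
    have h3 : p i ≤ p n := mono_le hp1 hmin i n h1 h2
    omega
  have hgt : p n < p (n + 1) := mono_succ hp1 hmin n hn
  omega

theorem iff_lt (hp1 : p 1 = 1) (hmin : Hmin p q) :
    ∀ n X, 1 ≤ n → X + 1 = p n → ∀ i, 1 ≤ i → (p i ≤ X ↔ i ≤ n - 1) := by
  intro n X hn hX i hi
  constructor
  · intro h
    by_contra hc
    have h1 : n ≤ i := by omega
    have h2 : p n ≤ p i := mono_le hp1 hmin n i hn h1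
    omega
  · intro h
    have hi' : i < n := by omega
    have := mono hp1 hmin i n hi hi'
    omega

theorem iff_le (hp1 : p 1 = 1) (hmin : Hmin p q) :
    ∀ n, 1 ≤ n → ∀ i, 1 ≤ i → (p i ≤ p n ↔ i ≤ n) := by
  intro n hn i hi
  constructor
  · intro h
    by_contra hc
    have := mono hp1 hmin n i hn (by omega)
    omega
  · intro h
    exact mono_le hp1 hmin i n hi h

theorem master (hp1 : p 1 = 1) (hq : ∀ n, 1 ≤ n → q n = p n + n)
    (hmin : Hmin p q) :
    ∀ k m, (∀ i, 1 ≤ i → (p i ≤ k ↔ i ≤ m)) → p (k + 1) = (k + 1) + m := by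
  intro k
  induction k using Nat.strong_induction_on with
  | _ k IH =>
    intro m hm
    rcases Nat.eq_zero_or_pos k with rfl | hk
    · have h1 := hm 1 le_rfl
      have hm0 : m = 0 := by
        by_contra hc
        have := h1.2 (by omega)
        omega
      subst hm0
      have h2 := p_ge hp1 hmin 1 le_rfl
      simpa using hp1
    · obtain ⟨n, hn1, hnk, hcase⟩ := cover hp1 hq hmin k hk
      -- helper A: for n' with p n' ≤ k, p (p n') + 1 = p n' + n'
      have hA : ∀ n', 1 ≤ n' → p n' ≤ k → p (p n') + 1 = p n' + n' := by
        intro n' hn' hle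
        have hge := p_ge hp1 hmin n' hn'
        obtain ⟨X, hX⟩ : ∃ X, p n' = X + 1 := ⟨p n' - 1, by omega⟩
        have hiff := iff_lt hp1 hmin n' X hn' hX.symm
        have hIH := IH X (by omega) (n' - 1) hiff
        rw [← hX] at hIH
        omega
      rcases hcase with hpn | hqn
      · -- k = p n
        have hAn := hA n hn1 (le_of_eq hpn)
        rw [hpn] at hAn
        have hqn' := hq n hn1
        have hstep := step2 hp1 hq hmin k n hk hn1 hnk (by omega)
        have hmn : m = n := by
          have h1 : n ≤ m := (hm n hn1).1 (le_of_eq hpn)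
          by_contra hc
          have h3 : p (n + 1) ≤ k := (hm (n + 1) (by omega)).2 (by omega)
          have h4 := mono_succ hp1 hmin n hn1
          omega
        subst hmn
        omega
      · -- k = q n
        have hqn' := hq n hn1
        have hgen := p_ge hp1 hmin n hn1
        have hpnk : p n < k := by omega
        have hp1n : 1 ≤ p n := by omega
        have hAn := hA n hn1 (by omega)
        have hpp1 := IH (p n) hpnk n (iff_le hp1 hmin n hn1)
        -- p (p n + 1) = p n + 1 + n = k + 1
        obtain ⟨Y, hY⟩ : ∃ Y, k = Y + 1 := ⟨k - 1, by omega⟩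
        have hYe : Y = p (p n) := by omega
        have hiff3 : ∀ i, 1 ≤ i → (p i ≤ Y ↔ i ≤ p n) := by
          intro i hi
          rw [hYe]
          exact iff_le hp1 hmin (p n) hp1n i hi
        have hpk := IH Y (by omega) (p n) hiff3
        rw [← hY] at hpk
        -- p k = k + p n
        have hno : ∀ j, 1 ≤ j → j ≤ k → q j ≠ p k + 1 := by
          intro j hj hjk he
          have hqj := hq j hj
          rcases le_or_gt j (p n) with h | h
          · have hpj : p j ≤ p (p n) := mono_le hp1 hmin j (p n) hj h
            omega
          · have hpj : p (p n + 1) ≤ p j := mono_le hp1 hmin (p n + 1) j (by omega) h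
            omega
        have hstep := step1 hp1 hq hmin k hk hno
        have hmpn : m = p n := by
          have h1 : p n ≤ m := (hm (p n) hp1n).1 (by omega)
          by_contra hc
          have h3 : p (p n + 1) ≤ k := (hm (p n + 1) (by omega)).2 (by omega)
          omega
        subst hmpn
        omega

theorem pq_aux (hp1 : p 1 = 1) (hq : ∀ n, 1 ≤ n → q n = p n + n)
    (hmin : Hmin p q) : ∀ n, 1 ≤ n → p (q n) = p n + q n := by
  intro n hn
  have hqn := hq n hn
  have hge := p_ge hp1 hmin n hn
  have hp1n : 1 ≤ p n := by omega
  -- A(n): p (p n) + 1 = p n + n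
  obtain ⟨X, hX⟩ : ∃ X, p n = X + 1 := ⟨p n - 1, by omega⟩
  have hA := master hp1 hq hmin X (n - 1) (iff_lt hp1 hmin n X hn hX.symm)
  rw [← hX] at hA
  -- q n = Y + 1 with Y = p (p n)
  obtain ⟨Y, hY⟩ : ∃ Y, q n = Y + 1 := ⟨q n - 1, by omega⟩
  have hYe : Y = p (p n) := by omega
  have hiff2 : ∀ i, 1 ≤ i → (p i ≤ Y ↔ i ≤ p n) := by
    intro i hi
    rw [hYe]
    exact iff_le hp1 hmin (p n) hp1n i hi
  have hfin := master hp1 hq hmin Y (p n) hiff2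
  rw [← hY] at hfin
  omega

end Wythoff11

theorem stmt_11 (p q : ℕ → ℕ)
    (hp1 : p 1 = 1)
    (hq : ∀ n, 1 ≤ n → q n = p n + n)
    (hmin : ∀ n, 1 ≤ n →
      IsLeast {m : ℕ | 0 < m ∧ ∀ i, 1 ≤ i → i ≤ n → m ≠ p i ∧ m ≠ q i} (p (n + 1))) :
    ∀ n, 1 ≤ n → p (q n) = p n + q n ∧ q (q n) = p n + 2 * q n := by
  intro n hn
  have hmin' : Wythoff11.Hmin p q := hmin
  have h1 := Wythoff11.pq_aux hp1 hq hmin' n hn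
  have hqn := hq n hn
  have hge := Wythoff11.p_ge hp1 hmin' n hn
  have hqq := hq (q n) (by omega)
  exact ⟨h1, by omega⟩
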